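/- Let 𝒜 ⊆ ℝ^m be a compact set, let A : ℝ × 𝒜 → ℝ and h : ℝ × 𝒜 → ℝ be continuous, 1-periodic in the first variable, with 0 < λ ≤ A(y,β) ≤ Λ for all (y,β). Let α : ℝ → 𝒜 be measurable and 1-periodic, set c_α(y) := A(y,α(y)) and p(y) := HM(c_α)/c_α(y). Suppose u : ℝ → ℝ is C² and 1-periodic and q, c ∈ ℝ satisfy sup_{β∈𝒜} ( −A(y,β)(q + u''(y)) + h(y,β) ) = c for every y. If moreover the control α is optimal, i.e. −A(y,α(y))(q + u''(y)) + h(y,α(y)) = c for almost every y, then ∫₀¹ ( −A(y,α(y)) q + h(y,α(y)) ) p(y) dy = c. -/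

import Mathlib

open MeasureTheory

/-- Harmonic mean of a 1-periodic function over one period:
`HM(b) = (∫₀¹ 1/b(y) dy)⁻¹`. -/
noncomputable def HM (b : ℝ → ℝ) : ℝ := (∫ y in (0:ℝ)..1, (b y)⁻¹)⁻¹

/-- Equality case of `L̄_α(q) ≤ H̄(q)` in one dimension: linearizing about an optimal control
(one realizing the supremum along the cell-problem solution a.e.) achieves the
homogenized value. -/
theorem stmt_3 {m : ℕ}
    (𝓐 : Set (Fin m → ℝ)) (h𝓐 : IsCompact 𝓐)
    (A h : ℝ → (Fin m → ℝ) → ℝ)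
    (hAcont : ContinuousOn (fun p : ℝ × (Fin m → ℝ) => A p.1 p.2) (Set.univ ×ˢ 𝓐))
    (hhcont : ContinuousOn (fun p : ℝ × (Fin m → ℝ) => h p.1 p.2) (Set.univ ×ˢ 𝓐))
    (hAper : ∀ (y : ℝ) (β : Fin m → ℝ), A (y + 1) β = A y β)
    (hhper : ∀ (y : ℝ) (β : Fin m → ℝ), h (y + 1) β = h y β)
    (lam Lam : ℝ) (hlam : 0 < lam)
    (hell : ∀ (y : ℝ), ∀ β ∈ 𝓐, lam ≤ A y β ∧ A y β ≤ Lam)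
    (α : ℝ → Fin m → ℝ) (hαmeas : Measurable α) (hαper : ∀ y, α (y + 1) = α y)
    (hαmem : ∀ y, α y ∈ 𝓐)
    (p : ℝ → ℝ) (hp : ∀ y, p y = HM (fun z => A z (α z)) / A y (α y))
    (u : ℝ → ℝ) (hu : ContDiff ℝ 2 u) (huper : ∀ y, u (y + 1) = u y)
    (q c : ℝ)
    (hcell : ∀ y : ℝ,
      sSup ((fun β => -A y β * (q + deriv (deriv u) y) + h y β) '' 𝓐) = c)
    (hopt : ∀ᵐ y ∂(volume : Measure ℝ),
      -A y (α y) * (q + deriv (deriv u) y) + h y (α y) = c) :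
    ∫ y in (0:ℝ)..1, (-A y (α y) * q + h y (α y)) * p y = c := by
  set cα : ℝ → ℝ := fun y => A y (α y) with hcα
  set H : ℝ := HM cα with hH
  have hb : ∀ y, lam ≤ cα y ∧ cα y ≤ Lam := fun y => hell y (α y) (hαmem y)
  have hpos : ∀ y, 0 < cα y := fun y => lt_of_lt_of_le hlam (hb y).1
  have hLam : 0 < Lam := lt_of_lt_of_le (hpos 0) (hb 0).2
  -- measurability of cα
  have hmeascα : Measurable cα := by
    have h1 : Continuous ((Set.univ ×ˢ 𝓐).restrict
        (fun p : ℝ × (Fin m → ℝ) => A p.1 p.2)) :=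
      continuousOn_iff_continuous_restrict.mp hAcont
    have h2 : Measurable (fun y : ℝ =>
        (⟨(y, α y), by exact ⟨Set.mem_univ _, hαmem y⟩⟩ :
          (Set.univ ×ˢ 𝓐 : Set (ℝ × (Fin m → ℝ))))) :=
      (measurable_id.prodMk hαmeas).subtype_mk
    exact h1.measurable.comp h2
  -- integrability of (cα)⁻¹ on [0,1]
  have hinvint : IntervalIntegrable (fun y => (cα y)⁻¹) volume 0 1 := by
    rw [intervalIntegrable_iff]
    constructor
    · exact (hmeascα.inv.aestronglyMeasurable).restrict
    · haveI : IsFiniteMeasure (volume.restrict (Set.uIoc (0:ℝ) 1)) :=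
        ⟨by simp [Set.uIoc, Real.volume_Ioc]⟩
      apply MeasureTheory.HasFiniteIntegral.of_bounded (C := lam⁻¹)
      filter_upwards with y
      rw [Real.norm_eq_abs, abs_of_pos (inv_pos.mpr (hpos y))]
      exact inv_anti₀ hlam (hb y).1
  -- positivity of the integral
  have hI : (0:ℝ) < ∫ y in (0:ℝ)..1, (cα y)⁻¹ := by
    have : ∫ y in (0:ℝ)..1, (Lam)⁻¹ ≤ ∫ y in (0:ℝ)..1, (cα y)⁻¹ := by
      apply intervalIntegral.integral_mono_on (by norm_num) intervalIntegrable_const hinvint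
      intro y _
      exact inv_anti₀ (hpos y) (hb y).2
    have h0 : ∫ y in (0:ℝ)..1, (Lam)⁻¹ = Lam⁻¹ := by simp
    nlinarith [inv_pos.mpr hLam]
  have hIne : (∫ y in (0:ℝ)..1, (cα y)⁻¹) ≠ 0 := ne_of_gt hI
  -- smoothness of u
  have hdu : ContDiff ℝ 1 (deriv u) := by
    have := (contDiff_succ_iff_deriv (n := 1)).mp hu
    exact this.2.2
  have hdu' : Differentiable ℝ (deriv u) := hdu.differentiable one_ne_zero
  have hcu'' : Continuous (deriv (deriv u)) := by
    have := (contDiff_succ_iff_deriv (n := 0)).mp hdu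
    exact this.2.2.continuous
  -- integral of u'' over a period is 0
  have hderper : ∀ y, deriv u (y + 1) = deriv u y := by
    intro y
    have : deriv (fun z => u (z + 1)) y = deriv u y := by
      congr 1; ext z; exact huper z
    rw [← this, deriv_comp_add_const]
  have hu''int : ∫ y in (0:ℝ)..1, deriv (deriv u) y = 0 := by
    rw [intervalIntegral.integral_deriv_eq_sub (fun y _ => hdu' y)
      (hcu''.intervalIntegrable 0 1)]
    have := hderper 0
    simp at this ⊢
    linarith
  -- rewrite integrand a.e.
  have hcongr : ∫ y in (0:ℝ)..1, (-cα y * q + h y (α y)) * p y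
      = ∫ y in (0:ℝ)..1, (c * H * (cα y)⁻¹ + H * deriv (deriv u) y) := by
    apply intervalIntegral.integral_congr_ae
    filter_upwards [hopt] with y hy _
    have hne : cα y ≠ 0 := ne_of_gt (hpos y)
    have hh' : h y (α y) = c + cα y * (q + deriv (deriv u) y) := by
      simp only [hcα] at hy ⊢; linarith
    rw [hp, hh']
    simp only [hcα] at hne ⊢
    field_simp
    ring
  rw [hcongr]
  rw [intervalIntegral.integral_add
    (by exact (hinvint.const_mul (c * H)))
    ((hcu''.intervalIntegrable 0 1).const_mul H)]
  rw [intervalIntegral.integral_const_mul, intervalIntegral.integral_const_mul, hu''int,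
    mul_zero, add_zero]
  have hHval : H = (∫ y in (0:ℝ)..1, (cα y)⁻¹)⁻¹ := rfl
  rw [hHval, mul_assoc, inv_mul_cancel₀ hIne, mul_one]
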